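/- Let p ≥ n > d/2 + 1 be real, d ≥ 2. For every k ∈ ℤ^d \ {0}, the sum G_{pn}(k) := 4 Σ_{h ∈ ℤ^d \ {0,k}} (|k|^p − |k−h|^p)^2 |P_{h,k−h}|^2 / (|h|^p |k−h|^{n−1} + |h|^n |k−h|^{p−1})^2 is finite, and sup_{k ∈ ℤ^d \ {0}} G_{pn}(k) ≤ 2^{2p} p^2 ζ_{2n−2}, where ζ_{2n−2} := Σ_{h ∈ ℤ^d \ {0}} |h|^{−(2n−2)} < ∞. -/

import Mathlib

open scoped BigOperators
open scoped InnerProductSpace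
noncomputable section

/-- The lattice point `h ∈ ℤ^d` viewed as a vector of `ℝ^d`. -/
def rvec {d : ℕ} (h : Fin d → ℤ) : EuclideanSpace ℝ (Fin d) :=
  (WithLp.equiv 2 (Fin d → ℝ)).symm (fun i => (h i : ℝ))

/-- The lattice point `h ∈ ℤ^d` viewed as a vector of `ℂ^d`. -/
def cvec {d : ℕ} (h : Fin d → ℤ) : EuclideanSpace ℂ (Fin d) :=
  (WithLp.equiv 2 (Fin d → ℂ)).symm (fun i => (h i : ℂ))

/-- The bilinear map `P_{hℓ}(a,b) = ((a·ℓ)/|ℓ|) Π_{h+ℓ} b`, where `Π_k` is the (Hermitian)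
orthogonal projection of `ℂ^d` onto `k^⊥`. -/
def Phl {d : ℕ} (h ℓ : Fin d → ℤ) (a b : EuclideanSpace ℂ (Fin d)) :
    EuclideanSpace ℂ (Fin d) :=
  ((∑ i, a i * (ℓ i : ℂ)) / (‖rvec ℓ‖ : ℂ)) •
    ((Submodule.orthogonalProjectionOnto ((ℂ ∙ cvec (h + ℓ))ᗮ) b : (ℂ ∙ cvec (h + ℓ))ᗮ) :
      EuclideanSpace ℂ (Fin d))

/-- The set of admissible constants `Q` for the bilinear map `P_{hℓ}` restricted to
`h^⊥ × ℓ^⊥` (bilinear-dot-product orthogonality with the real vectors `h`, `ℓ`). -/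
def bilinSet {d : ℕ} (h ℓ : Fin d → ℤ) : Set ℝ :=
  {Q : ℝ | 0 ≤ Q ∧ ∀ a b : EuclideanSpace ℂ (Fin d),
    (∑ i, (h i : ℂ) * a i) = 0 → (∑ i, (ℓ i : ℂ) * b i) = 0 →
      ‖Phl h ℓ a b‖ ≤ Q * ‖a‖ * ‖b‖}


/-- The norm of the bilinear map `P_{hℓ}` on `h^⊥ × ℓ^⊥`. -/
def bilinNorm {d : ℕ} (h ℓ : Fin d → ℤ) : ℝ := sInf (bilinSet h ℓ)

/-- Euclidean norm of a lattice point of `ℤ^d`. -/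
def latNorm {d : ℕ} (h : Fin d → ℤ) : ℝ := Real.sqrt (∑ i, ((h i : ℝ)) ^ 2)

/-- The general term of the sum defining `G_{pn}(k)` (without the prefactor `4`). -/
def Gterm {d : ℕ} (p n : ℝ) (k h : Fin d → ℤ) : ℝ :=
  (latNorm k ^ p - latNorm (k - h) ^ p) ^ 2 * bilinNorm h (k - h) ^ 2 /
    (latNorm h ^ p * latNorm (k - h) ^ (n - 1) +
      latNorm h ^ n * latNorm (k - h) ^ (p - 1)) ^ 2

lemma latNorm_eq_norm {d : ℕ} (h : Fin d → ℤ) : latNorm h = ‖rvec h‖ := by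
  rw [latNorm, EuclideanSpace.norm_eq]
  congr 1
  refine Finset.sum_congr rfl fun i _ => ?_
  rw [Real.norm_eq_abs, sq_abs]
  rfl

lemma rvec_sub {d : ℕ} (a b : Fin d → ℤ) : rvec (a - b) = rvec a - rvec b := by
  ext i
  simp [rvec, WithLp.equiv]

lemma latNorm_nonneg {d : ℕ} (h : Fin d → ℤ) : 0 ≤ latNorm h := Real.sqrt_nonneg _

lemma latNorm_triangle {d : ℕ} (k h : Fin d → ℤ) :
    latNorm k ≤ latNorm h + latNorm (k - h) := by
  rw [latNorm_eq_norm, latNorm_eq_norm, latNorm_eq_norm]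
  have : rvec k = rvec h + rvec (k - h) := by
    rw [rvec_sub]; abel
  rw [this]
  exact norm_add_le _ _

lemma latNorm_abs_sub {d : ℕ} (k h : Fin d → ℤ) :
    |latNorm k - latNorm (k - h)| ≤ latNorm h := by
  rw [latNorm_eq_norm, latNorm_eq_norm, latNorm_eq_norm]
  have : rvec h = rvec k - rvec (k - h) := by rw [rvec_sub]; abel
  rw [this]
  exact abs_norm_sub_norm_le _ _

lemma one_le_latNorm {d : ℕ} {h : Fin d → ℤ} (hh : h ≠ 0) : 1 ≤ latNorm h := by
  obtain ⟨i, hi⟩ := Function.ne_iff.mp hh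
  have h1 : (1 : ℝ) ≤ ((h i : ℝ)) ^ 2 := by
    have : (1 : ℤ) ≤ (h i) ^ 2 := by
      rcases lt_or_gt_of_ne (by simpa using hi) with hlt | hgt <;> nlinarith
    exact_mod_cast this
  have h2 : (1 : ℝ) ≤ ∑ j, ((h j : ℝ)) ^ 2 :=
    h1.trans (Finset.single_le_sum (f := fun j => ((h j : ℝ))^2) (fun j _ => sq_nonneg _) (Finset.mem_univ i))
  calc (1:ℝ) = Real.sqrt 1 := (Real.sqrt_one).symm
  _ ≤ latNorm h := Real.sqrt_le_sqrt h2



lemma cvec_norm {d : ℕ} (ℓ : Fin d → ℤ) : ‖cvec ℓ‖ = ‖rvec ℓ‖ := by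
  rw [EuclideanSpace.norm_eq, EuclideanSpace.norm_eq]
  congr 1
  refine Finset.sum_congr rfl fun i _ => ?_
  have : (cvec ℓ) i = ((ℓ i : ℂ)) := rfl
  have h2 : (rvec ℓ) i = ((ℓ i : ℝ)) := rfl
  rw [this, h2]
  simp

lemma inner_cvec {d : ℕ} (ℓ : Fin d → ℤ) (a : EuclideanSpace ℂ (Fin d)) :
    ⟪cvec ℓ, a⟫_ℂ = ∑ i, a i * (ℓ i : ℂ) := by
  rw [PiLp.inner_apply]
  refine Finset.sum_congr rfl fun i _ => ?_
  have : (cvec ℓ) i = ((ℓ i : ℂ)) := rfl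
  rw [this, RCLike.inner_apply]
  simp [mul_comm]

lemma one_mem_bilinSet {d : ℕ} (h ℓ : Fin d → ℤ) : (1 : ℝ) ∈ bilinSet h ℓ := by
  refine ⟨zero_le_one, fun a b _ _ => ?_⟩
  rw [Phl, norm_smul, one_mul]
  show _ * _ ≤ _
  have hproj : ‖((Submodule.orthogonalProjectionOnto ((ℂ ∙ cvec (h + ℓ))ᗮ) b : (ℂ ∙ cvec (h + ℓ))ᗮ) :
      EuclideanSpace ℂ (Fin d))‖ ≤ ‖b‖ := by
    have h1 : ‖((Submodule.orthogonalProjectionOnto ((ℂ ∙ cvec (h + ℓ))ᗮ) b : (ℂ ∙ cvec (h + ℓ))ᗮ) :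
        EuclideanSpace ℂ (Fin d))‖ = ‖Submodule.orthogonalProjectionOnto ((ℂ ∙ cvec (h + ℓ))ᗮ) b‖ := rfl
    rw [h1]
    calc ‖Submodule.orthogonalProjectionOnto ((ℂ ∙ cvec (h + ℓ))ᗮ) b‖
        ≤ ‖Submodule.orthogonalProjectionOnto ((ℂ ∙ cvec (h + ℓ))ᗮ)‖ * ‖b‖ :=
          (Submodule.orthogonalProjectionOnto ((ℂ ∙ cvec (h + ℓ))ᗮ)).le_opNorm b
      _ ≤ 1 * ‖b‖ := by
          have := Submodule.orthogonalProjectionOnto_norm_le ((ℂ ∙ cvec (h + ℓ))ᗮ)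
          have hb := norm_nonneg b
          nlinarith
      _ = ‖b‖ := one_mul _
  by_cases hz : ‖rvec ℓ‖ = 0
  · simp [hz]
    positivity
  · have hS : ‖(∑ i, a i * (ℓ i : ℂ))‖ ≤ ‖a‖ * ‖rvec ℓ‖ := by
      rw [← inner_cvec]
      calc ‖⟪cvec ℓ, a⟫_ℂ‖ ≤ ‖cvec ℓ‖ * ‖a‖ := norm_inner_le_norm _ _
      _ = ‖a‖ * ‖rvec ℓ‖ := by rw [cvec_norm]; ring
    have hc : ‖((∑ i, a i * (ℓ i : ℂ)) / (‖rvec ℓ‖ : ℂ))‖ ≤ ‖a‖ := by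
      rw [norm_div]
      have : ‖((‖rvec ℓ‖ : ℝ) : ℂ)‖ = ‖rvec ℓ‖ := by
        rw [Complex.norm_real, norm_norm]
      rw [this, div_le_iff₀ (lt_of_le_of_ne (norm_nonneg _) (Ne.symm hz))]
      linarith [hS]
    calc ‖((∑ i, a i * (ℓ i : ℂ)) / (‖rvec ℓ‖ : ℂ))‖ *
        ‖((Submodule.orthogonalProjectionOnto ((ℂ ∙ cvec (h + ℓ))ᗮ) b : (ℂ ∙ cvec (h + ℓ))ᗮ) :
          EuclideanSpace ℂ (Fin d))‖ ≤ ‖a‖ * ‖b‖ :=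
      mul_le_mul hc hproj (norm_nonneg _) (norm_nonneg _)

lemma bilinNorm_nonneg {d : ℕ} (h ℓ : Fin d → ℤ) : 0 ≤ bilinNorm h ℓ :=
  le_csInf ⟨1, one_mem_bilinSet h ℓ⟩ fun _ hQ => hQ.1

lemma bilinNorm_le_one {d : ℕ} (h ℓ : Fin d → ℤ) : bilinNorm h ℓ ≤ 1 :=
  csInf_le ⟨0, fun _ hQ => hQ.1⟩ (one_mem_bilinSet h ℓ)

lemma rpow_mvt {x y M p : ℝ} (hy : 0 ≤ y) (hyx : y ≤ x) (hxM : x ≤ M) (hp : 1 ≤ p) :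
    x ^ p - y ^ p ≤ p * (x - y) * M ^ (p - 1) := by
  rcases eq_or_lt_of_le hyx with rfl | hlt
  · simp
  · have hM : 0 ≤ M := le_trans (hy.trans hyx) hxM
    obtain ⟨c, hc, hc'⟩ := exists_hasDerivAt_eq_slope (fun t => t ^ p)
      (fun t => p * t ^ (p - 1)) hlt
      (by
        intro t _
        exact (Real.continuousAt_rpow_const t p (Or.inr (by linarith))).continuousWithinAt)
      (fun t _ => Real.hasDerivAt_rpow_const (Or.inr hp))
    have hxy : (0:ℝ) < x - y := by linarith
    have hne : x - y ≠ 0 := ne_of_gt hxy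
    rw [eq_div_iff hne] at hc'
    have hthis : x ^ p - y ^ p = p * c ^ (p - 1) * (x - y) := by linarith
    rw [hthis]
    have hcM : c ^ (p - 1) ≤ M ^ (p - 1) :=
      Real.rpow_le_rpow (by linarith [hc.1, hy]) (by linarith [hc.2, hxM]) (by linarith)
    have hpp : 0 ≤ p := by linarith
    calc p * c ^ (p - 1) * (x - y) = (p * (x - y)) * c ^ (p - 1) := by ring
      _ ≤ (p * (x - y)) * M ^ (p - 1) := mul_le_mul_of_nonneg_left hcM (by positivity)
      _ = p * (x - y) * M ^ (p - 1) := by ring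

lemma rpow_abs_sub_le {x y M p : ℝ} (hx : 0 ≤ x) (hy : 0 ≤ y) (hxM : x ≤ M) (hyM : y ≤ M)
    (hp : 1 ≤ p) : |x ^ p - y ^ p| ≤ p * |x - y| * M ^ (p - 1) := by
  rcases le_total y x with hle | hle
  · rw [abs_of_nonneg (by nlinarith [Real.rpow_le_rpow hy hle (by linarith : (0:ℝ) ≤ p)] : 0 ≤ x ^ p - y ^ p),
      abs_of_nonneg (by linarith : (0:ℝ) ≤ x - y)]
    exact rpow_mvt hy hle hxM hp
  · rw [abs_sub_comm, abs_sub_comm x y,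
      abs_of_nonneg (by nlinarith [Real.rpow_le_rpow hx hle (by linarith : (0:ℝ) ≤ p)] : 0 ≤ y ^ p - x ^ p),
      abs_of_nonneg (by linarith : (0:ℝ) ≤ y - x)]
    exact rpow_mvt hx hle hyM hp

lemma add_rpow_le {a b q : ℝ} (ha : 0 ≤ a) (hb : 0 ≤ b) (hq : 1 ≤ q) :
    (a + b) ^ q ≤ 2 ^ (q - 1) * (a ^ q + b ^ q) := by
  have h := NNReal.coe_le_coe.mpr
    (NNReal.rpow_add_le_mul_rpow_add_rpow a.toNNReal b.toNNReal hq)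
  push_cast [Real.coe_toNNReal _ ha, Real.coe_toNNReal _ hb] at h
  exact h

lemma key_bound {a b K Q p n : ℝ} (ha : 1 ≤ a) (hb : 1 ≤ b) (hK : 0 ≤ K)
    (hKab : K ≤ a + b) (hKb : |K - b| ≤ a) (hQ0 : 0 ≤ Q) (hQ1 : Q ≤ 1)
    (hn2 : 2 ≤ n) (hnp : n ≤ p) :
    (K ^ p - b ^ p) ^ 2 * Q ^ 2 / (a ^ p * b ^ (n - 1) + a ^ n * b ^ (p - 1)) ^ 2 ≤
      2 ^ (2 * p - 4) * p ^ 2 * (1 / a ^ (2 * n - 2) + 1 / b ^ (2 * n - 2)) := by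
  have ha0 : (0:ℝ) < a := by linarith
  have hb0 : (0:ℝ) < b := by linarith
  have hp1 : (1:ℝ) ≤ p := by linarith
  have hp2 : (2:ℝ) ≤ p := by linarith
  set c := min a b with hc
  have hc1 : 1 ≤ c := le_min ha hb
  have hc0 : (0:ℝ) < c := by linarith
  set D := a ^ p * b ^ (n - 1) + a ^ n * b ^ (p - 1) with hD
  have hD0 : (0:ℝ) < D := by positivity
  -- step 1
  have step1 : |K ^ p - b ^ p| ≤ p * a * (a + b) ^ (p - 1) := by
    have h1 := rpow_abs_sub_le hK hb0.le hKab (by linarith : b ≤ a + b) hp1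
    calc |K ^ p - b ^ p| ≤ p * |K - b| * (a + b) ^ (p - 1) := h1
      _ ≤ p * a * (a + b) ^ (p - 1) := by gcongr <;> linarith
  -- step 2
  have haa : a * a ^ (p - 1) = a ^ p := by
    nth_rewrite 1 [← Real.rpow_one a]
    rw [← Real.rpow_add ha0]
    ring_nf
  have han : a ^ (n - 1) * a = a ^ n := by
    nth_rewrite 2 [← Real.rpow_one a]
    rw [← Real.rpow_add ha0]
    ring_nf
  have step2 : a * (a + b) ^ (p - 1) ≤ 2 ^ (p - 2) * (a ^ p + a * b ^ (p - 1)) := by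
    have h2 := add_rpow_le ha0.le hb0.le (by linarith : (1:ℝ) ≤ p - 1)
    calc a * (a + b) ^ (p - 1) ≤ a * (2 ^ (p - 1 - 1) * (a ^ (p - 1) + b ^ (p - 1))) := by
          gcongr
      _ = 2 ^ (p - 1 - 1) * (a * a ^ (p - 1) + a * b ^ (p - 1)) := by ring
      _ = 2 ^ (p - 2) * (a ^ p + a * b ^ (p - 1)) := by
          have hpe : p - 1 - 1 = p - 2 := by ring
          rw [hpe, haa]
  -- step 3
  have hca : c ^ (n - 1) ≤ a ^ (n - 1) :=
    Real.rpow_le_rpow hc0.le (min_le_left a b) (by linarith)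
  have hcb : c ^ (n - 1) ≤ b ^ (n - 1) :=
    Real.rpow_le_rpow hc0.le (min_le_right a b) (by linarith)
  have step3 : c ^ (n - 1) * (a ^ p + a * b ^ (p - 1)) ≤ D := by
    have h31 : c ^ (n - 1) * a ^ p ≤ a ^ p * b ^ (n - 1) := by
      rw [mul_comm]
      gcongr
    have h32 : c ^ (n - 1) * (a * b ^ (p - 1)) ≤ a ^ n * b ^ (p - 1) := by
      calc c ^ (n - 1) * (a * b ^ (p - 1)) ≤ a ^ (n - 1) * (a * b ^ (p - 1)) := by
            gcongr
        _ = (a ^ (n - 1) * a) * b ^ (p - 1) := by ring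
        _ = a ^ n * b ^ (p - 1) := by rw [han]
    calc c ^ (n - 1) * (a ^ p + a * b ^ (p - 1))
        = c ^ (n - 1) * a ^ p + c ^ (n - 1) * (a * b ^ (p - 1)) := by ring
      _ ≤ D := add_le_add h31 h32
  -- step 4
  have hcp0 : (0:ℝ) < c ^ (n - 1) := Real.rpow_pos_of_pos hc0 _
  have step4 : |K ^ p - b ^ p| ≤ p * 2 ^ (p - 2) * D / c ^ (n - 1) := by
    rw [le_div_iff₀ hcp0]
    calc |K ^ p - b ^ p| * c ^ (n - 1) ≤ (p * a * (a + b) ^ (p - 1)) * c ^ (n - 1) := by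
          gcongr
      _ = p * (a * (a + b) ^ (p - 1)) * c ^ (n - 1) := by ring
      _ ≤ p * (2 ^ (p - 2) * (a ^ p + a * b ^ (p - 1))) * c ^ (n - 1) := by
          gcongr
      _ = p * 2 ^ (p - 2) * (c ^ (n - 1) * (a ^ p + a * b ^ (p - 1))) := by ring
      _ ≤ p * 2 ^ (p - 2) * D := by
          gcongr
  -- numerator bound
  have hE0 : 0 ≤ p * 2 ^ (p - 2) * D / c ^ (n - 1) := by positivity
  have hnum : (K ^ p - b ^ p) ^ 2 * Q ^ 2 ≤ (p * 2 ^ (p - 2) * D / c ^ (n - 1)) ^ 2 := by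
    have hQsq : Q ^ 2 ≤ 1 := by nlinarith
    calc (K ^ p - b ^ p) ^ 2 * Q ^ 2 ≤ (K ^ p - b ^ p) ^ 2 * 1 := by
          gcongr
      _ = |K ^ p - b ^ p| ^ 2 := by rw [mul_one, sq_abs]
      _ ≤ (p * 2 ^ (p - 2) * D / c ^ (n - 1)) ^ 2 := by
          gcongr <;> first | exact abs_nonneg _ | exact step4
  have hfrac : (K ^ p - b ^ p) ^ 2 * Q ^ 2 / D ^ 2 ≤
      p ^ 2 * 2 ^ (2 * p - 4) / c ^ (2 * n - 2) := by
    have h2sq : ((2:ℝ) ^ (p - 2)) ^ 2 = 2 ^ (2 * p - 4) := by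
      rw [sq, ← Real.rpow_add two_pos]
      ring_nf
    have hcsq : (c ^ (n - 1)) ^ 2 = c ^ (2 * n - 2) := by
      rw [sq, ← Real.rpow_add hc0]
      ring_nf
    have heq : (p * 2 ^ (p - 2) * D / c ^ (n - 1)) ^ 2 / D ^ 2 =
        p ^ 2 * 2 ^ (2 * p - 4) / c ^ (2 * n - 2) := by
      rw [← h2sq, ← hcsq]
      field_simp
    calc (K ^ p - b ^ p) ^ 2 * Q ^ 2 / D ^ 2
        ≤ (p * 2 ^ (p - 2) * D / c ^ (n - 1)) ^ 2 / D ^ 2 := by gcongr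
      _ = p ^ 2 * 2 ^ (2 * p - 4) / c ^ (2 * n - 2) := heq
  refine hfrac.trans ?_
  have hcinv : 1 / c ^ (2 * n - 2) ≤ 1 / a ^ (2 * n - 2) + 1 / b ^ (2 * n - 2) := by
    rcases min_choice a b with hmin | hmin
    · rw [hc, hmin]
      have : (0:ℝ) ≤ 1 / b ^ (2 * n - 2) := by positivity
      linarith
    · rw [hc, hmin]
      have : (0:ℝ) ≤ 1 / a ^ (2 * n - 2) := by positivity
      linarith
  calc p ^ 2 * 2 ^ (2 * p - 4) / c ^ (2 * n - 2)
      = 2 ^ (2 * p - 4) * p ^ 2 * (1 / c ^ (2 * n - 2)) := by ring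
    _ ≤ 2 ^ (2 * p - 4) * p ^ 2 * (1 / a ^ (2 * n - 2) + 1 / b ^ (2 * n - 2)) := by
        gcongr

variable {d : ℕ}

def supN (h : Fin d → ℤ) : ℕ := Finset.univ.sup fun i => (h i).natAbs

lemma supN_le_iff {h : Fin d → ℤ} {m : ℕ} : supN h ≤ m ↔ ∀ i, (h i).natAbs ≤ m := by
  simp [supN, Finset.sup_le_iff]

lemma one_le_supN {h : Fin d → ℤ} (hh : h ≠ 0) : 1 ≤ supN h := by
  obtain ⟨i, hi⟩ := Function.ne_iff.mp hh
  have : 1 ≤ (h i).natAbs := by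
    simp only [Pi.zero_apply] at hi
    omega
  exact this.trans (Finset.le_sup (f := fun i => (h i).natAbs) (Finset.mem_univ i))

lemma supN_le_latNorm (hd : 0 < d) (h : Fin d → ℤ) : (supN h : ℝ) ≤ latNorm h := by
  have : Nonempty (Fin d) := Fin.pos_iff_nonempty.mp hd
  have hne : (Finset.univ : Finset (Fin d)).Nonempty := Finset.univ_nonempty
  obtain ⟨i, -, hi⟩ := Finset.exists_mem_eq_sup Finset.univ hne fun i => (h i).natAbs
  have hsup : supN h = (h i).natAbs := hi
  rw [latNorm, show (supN h : ℝ) = Real.sqrt (((h i).natAbs : ℝ) ^ 2) by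
    rw [Real.sqrt_sq (by positivity), hsup]]
  apply Real.sqrt_le_sqrt
  have : (((h i).natAbs : ℝ)) ^ 2 = ((h i : ℝ)) ^ 2 := by
    rw [Nat.cast_natAbs]
    push_cast
    rw [sq_abs]
  rw [this]
  exact Finset.single_le_sum (f := fun j => ((h j : ℝ))^2) (fun j _ => sq_nonneg _)
    (Finset.mem_univ i)

def boxZ (d m : ℕ) : Finset (Fin d → ℤ) :=
  Fintype.piFinset fun _ => Finset.Icc (-(m:ℤ)) (m:ℤ)

lemma mem_boxZ {m : ℕ} {h : Fin d → ℤ} : h ∈ boxZ d m ↔ ∀ i, (h i).natAbs ≤ m := by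
  simp only [boxZ, Fintype.mem_piFinset, Finset.mem_Icc]
  constructor <;> intro H i <;> have := H i <;> omega

lemma card_boxZ (m : ℕ) : (boxZ d m).card = (2 * m + 1) ^ d := by
  rw [boxZ, Fintype.card_piFinset]
  have : (Finset.Icc (-(m:ℤ)) (m:ℤ)).card = 2 * m + 1 := by
    rw [Int.card_Icc]
    omega
  simp [this]

lemma pow_sub_pow_le_real {x y : ℝ} (hy : 0 ≤ y) (hyx : y ≤ x) (k : ℕ) :
    x ^ k - y ^ k ≤ k * (x - y) * x ^ (k - 1) := by
  rcases Nat.eq_zero_or_pos k with rfl | hk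
  · simp
  have hgs := geom_sum₂_mul x y k
  have hS : ∑ i ∈ Finset.range k, x ^ i * y ^ (k - 1 - i) ≤ k * x ^ (k - 1) := by
    calc ∑ i ∈ Finset.range k, x ^ i * y ^ (k - 1 - i)
        ≤ ∑ i ∈ Finset.range k, x ^ (k - 1) := by
          refine Finset.sum_le_sum fun i hi => ?_
          have hik : i ≤ k - 1 := by
            have := Finset.mem_range.mp hi; omega
          calc x ^ i * y ^ (k - 1 - i) ≤ x ^ i * x ^ (k - 1 - i) :=
                mul_le_mul_of_nonneg_left (pow_le_pow_left₀ hy hyx _)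
                  (pow_nonneg (hy.trans hyx) i)
            _ = x ^ (k - 1) := by
                rw [← pow_add]
                congr 1
                omega
      _ = k * x ^ (k - 1) := by
          rw [Finset.sum_const, Finset.card_range, nsmul_eq_mul]
  calc x ^ k - y ^ k = (∑ i ∈ Finset.range k, x ^ i * y ^ (k - 1 - i)) * (x - y) := hgs.symm
    _ ≤ (k * x ^ (k - 1)) * (x - y) := by
        have hx : 0 ≤ x := hy.trans hyx
        have hxy : 0 ≤ x - y := by linarith
        exact mul_le_mul_of_nonneg_right hS hxy
    _ = k * (x - y) * x ^ (k - 1) := by ring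

lemma boxZ_mono {m₁ m₂ : ℕ} (hm : m₁ ≤ m₂) : boxZ d m₁ ⊆ boxZ d m₂ := fun h hh =>
  mem_boxZ.mpr fun i => (mem_boxZ.mp hh i).trans hm

lemma shell_card_bound (hd : 1 ≤ d) {m : ℕ} (hm : 1 ≤ m) :
    (((boxZ d m) \ (boxZ d (m - 1))).card : ℝ) ≤ 2 * d * ((3 * m : ℝ)) ^ (d - 1) := by
  rw [Finset.card_sdiff_of_subset (boxZ_mono (by omega)), card_boxZ, card_boxZ]
  have hle : (2 * (m - 1) + 1) ^ d ≤ (2 * m + 1) ^ d :=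
    Nat.pow_le_pow_left (by omega) d
  rw [Nat.cast_sub hle]
  have hcast1 : ((2 * m + 1 : ℕ) : ℝ) = 2 * (m:ℝ) + 1 := by push_cast; ring
  have hcast2 : ((2 * (m - 1) + 1 : ℕ) : ℝ) = 2 * (m:ℝ) - 1 := by
    have : (((m - 1 : ℕ)) : ℝ) = (m:ℝ) - 1 := by
      rw [Nat.cast_sub hm]; norm_num
    push_cast [this]; ring
  push_cast [hcast1, hcast2]
  have key := pow_sub_pow_le_real (x := 2*(m:ℝ)+1) (y := 2*(m:ℝ)-1)
    (by
      have : (1:ℝ) ≤ (m:ℝ) := by exact_mod_cast hm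
      linarith)
    (by linarith) d
  have h3m : (2*(m:ℝ)+1) ^ (d-1) ≤ (3*(m:ℝ)) ^ (d-1) := by
    have : (1:ℝ) ≤ (m:ℝ) := by exact_mod_cast hm
    exact pow_le_pow_left₀ (by linarith) (by linarith) _
  calc (2*(m:ℝ)+1) ^ d - (2*(m:ℝ)-1) ^ d
      ≤ (d:ℝ) * ((2*(m:ℝ)+1) - (2*(m:ℝ)-1)) * (2*(m:ℝ)+1) ^ (d-1) := key
    _ = 2 * (d:ℝ) * (2*(m:ℝ)+1) ^ (d-1) := by ring
    _ ≤ 2 * (d:ℝ) * (3*(m:ℝ)) ^ (d-1) := by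
        gcongr

lemma summable_supN_rpow (hd : 2 ≤ d) {σ : ℝ} (hσ : (d:ℝ) < σ) :
    Summable fun h : Fin d → ℤ => (supN h : ℝ) ^ (-σ) := by
  have hd0 : (0:ℝ) < d := by positivity
  have hσ0 : (0:ℝ) < σ := hd0.trans hσ
  have hF0 : (0 : (Fin d → ℤ) → ℝ) ≤ fun h : Fin d → ℤ => (supN h : ℝ) ^ (-σ) :=
    fun h => by positivity
  have hs : ∀ h : Fin d → ℤ, ∃! m : ℕ, h ∈ (fun m : ℕ => {h' | supN h' = m}) m :=
    fun h => ⟨supN h, rfl, fun m hm => hm.symm⟩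
  rw [summable_partition hF0 hs]
  constructor
  · intro m
    have hfin : {h' : Fin d → ℤ | supN h' = m}.Finite := by
      apply Set.Finite.subset (boxZ d m).finite_toSet
      intro h hh
      simp only [Set.mem_setOf_eq] at hh
      exact Finset.mem_coe.mpr (mem_boxZ.mpr fun i => hh ▸
        (Finset.le_sup (f := fun i => (h i).natAbs) (Finset.mem_univ i)))
    have : Finite ({h' : Fin d → ℤ | supN h' = m}) := hfin.to_subtype
    exact Summable.of_finite
  · refine Summable.of_nonneg_of_le
      (f := fun m : ℕ => (2 * (d:ℝ) * 3 ^ (d-1)) * (m:ℝ) ^ ((d:ℝ) - 1 - σ))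
      (fun m => tsum_nonneg fun i => hF0 _) (fun m => ?_)
      ((Real.summable_nat_rpow.mpr (by linarith)).mul_left _)
    · 
      rcases Nat.eq_zero_or_pos m with rfl | hm
      · have hzero : ∀ i : {h' : Fin d → ℤ | supN h' = 0}, ((supN (i:Fin d → ℤ) : ℝ)) ^ (-σ) = 0 := by
          rintro ⟨i, hi⟩
          simp only [Set.mem_setOf_eq] at hi
          rw [hi]
          simp [Real.zero_rpow (by linarith : -σ ≠ 0)]
        rw [tsum_congr hzero, tsum_zero]
        positivity
      · have hfin : {h' : Fin d → ℤ | supN h' = m}.Finite := by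
          apply Set.Finite.subset (boxZ d m).finite_toSet
          intro h hh
          simp only [Set.mem_setOf_eq] at hh
          exact Finset.mem_coe.mpr (mem_boxZ.mpr fun i => hh ▸
            (Finset.le_sup (f := fun i => (h i).natAbs) (Finset.mem_univ i)))
        have hconst : ∀ i : {h' : Fin d → ℤ | supN h' = m},
            ((supN (i:Fin d → ℤ) : ℝ)) ^ (-σ) = (m:ℝ) ^ (-σ) := by
          rintro ⟨i, hi⟩
          simp only [Set.mem_setOf_eq] at hi
          rw [hi]
        rw [tsum_congr hconst, tsum_const, nsmul_eq_mul, Nat.card_coe_set_eq]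
        have hsub : {h' : Fin d → ℤ | supN h' = m} ⊆ ↑(boxZ d m \ boxZ d (m-1)) := by
          intro h hh
          simp only [Set.mem_setOf_eq] at hh
          rw [Finset.coe_sdiff]
          refine ⟨Finset.mem_coe.mpr (mem_boxZ.mpr fun i => hh ▸
            (Finset.le_sup (f := fun i => (h i).natAbs) (Finset.mem_univ i))), ?_⟩
          intro hmem
          have := mem_boxZ.mp (Finset.mem_coe.mp hmem)
          have : supN h ≤ m - 1 := supN_le_iff.mpr this
          omega
        have hcard : ({h' : Fin d → ℤ | supN h' = m}.ncard : ℝ) ≤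
            ((boxZ d m \ boxZ d (m-1)).card : ℝ) := by
          have := Set.ncard_le_ncard hsub (boxZ d m \ boxZ d (m-1)).finite_toSet
          rw [Set.ncard_coe_finset] at this
          exact_mod_cast this
        have hm1 : (1:ℝ) ≤ (m:ℝ) := by exact_mod_cast hm
        have hmpos : (0:ℝ) < (m:ℝ) ^ (-σ) := Real.rpow_pos_of_pos (by linarith) _
        calc ({h' : Fin d → ℤ | supN h' = m}.ncard : ℝ) * (m:ℝ) ^ (-σ)
            ≤ (2 * (d:ℝ) * ((3 * (m:ℝ)) ^ (d-1))) * (m:ℝ) ^ (-σ) := by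
              refine mul_le_mul_of_nonneg_right (hcard.trans ?_) hmpos.le
              exact shell_card_bound (by omega) hm
          _ = (2 * (d:ℝ) * 3 ^ (d-1)) * ((m:ℝ) ^ (d-1) * (m:ℝ) ^ (-σ)) := by
              rw [mul_pow]; ring
          _ = (2 * (d:ℝ) * 3 ^ (d-1)) * (m:ℝ) ^ ((d:ℝ) - 1 - σ) := by
              congr 1
              rw [← Real.rpow_natCast (m:ℝ) (d-1), ← Real.rpow_add (by linarith)]
              congr 1
              have : ((d - 1 : ℕ) : ℝ) = (d:ℝ) - 1 := by
                rw [Nat.cast_sub (by omega)]; norm_num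
              rw [this]; ring

lemma zeta_summable (hd : 2 ≤ d) {n : ℝ} (hn : (d:ℝ)/2 + 1 < n) :
    Summable (fun h : {h : Fin d → ℤ // h ≠ 0} =>
      1 / latNorm (h : Fin d → ℤ) ^ (2 * n - 2)) := by
  have hσ : (d:ℝ) < 2 * n - 2 := by linarith
  have hσ0 : (0:ℝ) < 2 * n - 2 := by
    have : (0:ℝ) < (d:ℝ) := by positivity
    linarith
  have hS := (summable_supN_rpow hd hσ).subtype {h : Fin d → ℤ | h ≠ 0}
  refine Summable.of_nonneg_of_le (fun h => one_div_nonneg.mpr (Real.rpow_nonneg (Real.sqrt_nonneg _) _)) (fun h => ?_) hS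
  obtain ⟨h, hh⟩ := h
  have h1 : (1:ℝ) ≤ (supN h : ℝ) := by exact_mod_cast one_le_supN hh
  have hlat : (supN h : ℝ) ≤ latNorm h := supN_le_latNorm (by omega) h
  show 1 / latNorm h ^ (2*n-2) ≤ (supN h : ℝ) ^ (-(2*n-2))
  rw [Real.rpow_neg (by linarith), ← one_div]
  apply one_div_le_one_div_of_le (Real.rpow_pos_of_pos (by linarith) _)
  exact Real.rpow_le_rpow (by linarith) hlat hσ0.le

/-- Let `p ≥ n > d/2 + 1` (`d ≥ 2`). Then `ζ_{2n-2} = Σ_{h≠0} |h|^{-(2n-2)}` is finite, and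
for every `k ∈ ℤ^d \ {0}` the sum defining
`G_{pn}(k) = 4 Σ_{h ∉ {0,k}} (|k|^p - |k-h|^p)² |P_{h,k-h}|² /
  (|h|^p|k-h|^{n-1} + |h|^n|k-h|^{p-1})²`
is finite and `G_{pn}(k) ≤ 2^{2p} p² ζ_{2n-2}`. -/
theorem Gpn_finite_and_bounded (d : ℕ) (hd : 2 ≤ d) (p n : ℝ) (hpn : n ≤ p)
    (hn : (d : ℝ) / 2 + 1 < n) :
    Summable (fun h : {h : Fin d → ℤ // h ≠ 0} =>
      1 / latNorm (h : Fin d → ℤ) ^ (2 * n - 2)) ∧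
    ∀ k : Fin d → ℤ, k ≠ 0 →
      Summable (fun h : {h : Fin d → ℤ // h ≠ 0 ∧ h ≠ k} =>
        Gterm p n k (h : Fin d → ℤ)) ∧
      4 * ∑' h : {h : Fin d → ℤ // h ≠ 0 ∧ h ≠ k}, Gterm p n k (h : Fin d → ℤ) ≤
        2 ^ (2 * p) * p ^ 2 *
          ∑' h : {h : Fin d → ℤ // h ≠ 0}, 1 / latNorm (h : Fin d → ℤ) ^ (2 * n - 2) := by
  classical
  have hζ : Summable (fun h : {h : Fin d → ℤ // h ≠ 0} =>
      1 / latNorm (h : Fin d → ℤ) ^ (2 * n - 2)) := zeta_summable hd hn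
  refine ⟨hζ, fun k hk => ?_⟩
  have hd2 : (2:ℝ) ≤ (d:ℝ) := by exact_mod_cast hd
  have hn2 : (2:ℝ) ≤ n := by linarith
  have hp2 : (2:ℝ) ≤ p := by linarith
  have hp0 : (0:ℝ) < p := by linarith
  -- injections into the nonzero lattice
  let e₁ : {h : Fin d → ℤ // h ≠ 0 ∧ h ≠ k} → {h : Fin d → ℤ // h ≠ 0} :=
    fun h => ⟨h.1, h.2.1⟩
  let e₂ : {h : Fin d → ℤ // h ≠ 0 ∧ h ≠ k} → {h : Fin d → ℤ // h ≠ 0} :=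
    fun h => ⟨k - h.1, sub_ne_zero.mpr (Ne.symm h.2.2)⟩
  have he₁ : Function.Injective e₁ := by
    rintro ⟨x, hx⟩ ⟨y, hy⟩ hxy
    simpa [e₁, Subtype.ext_iff] using hxy
  have he₂ : Function.Injective e₂ := by
    rintro ⟨x, hx⟩ ⟨y, hy⟩ hxy
    simp only [e₂, Subtype.ext_iff] at hxy ⊢
    exact sub_right_injective hxy
  -- pointwise bound
  have key : ∀ h : {h : Fin d → ℤ // h ≠ 0 ∧ h ≠ k}, Gterm p n k (h : Fin d → ℤ) ≤
      2 ^ (2 * p - 4) * p ^ 2 *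
        (1 / latNorm (h : Fin d → ℤ) ^ (2 * n - 2) +
          1 / latNorm (k - (h : Fin d → ℤ)) ^ (2 * n - 2)) := by
    rintro ⟨h, hh0, hhk⟩
    have hb : k - h ≠ 0 := sub_ne_zero.mpr (Ne.symm hhk)
    exact key_bound (one_le_latNorm hh0) (one_le_latNorm hb) (latNorm_nonneg k)
      (latNorm_triangle k h) (latNorm_abs_sub k h)
      (bilinNorm_nonneg h (k - h)) (bilinNorm_le_one h (k - h)) hn2 hpn
  have hGnn : ∀ h : {h : Fin d → ℤ // h ≠ 0 ∧ h ≠ k}, 0 ≤ Gterm p n k (h : Fin d → ℤ) := by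
    intro h
    unfold Gterm
    positivity
  have hs1 : Summable fun h : {h : Fin d → ℤ // h ≠ 0 ∧ h ≠ k} =>
      1 / latNorm (h : Fin d → ℤ) ^ (2 * n - 2) := by
    simpa [Function.comp_def, e₁] using hζ.comp_injective he₁
  have hs2 : Summable fun h : {h : Fin d → ℤ // h ≠ 0 ∧ h ≠ k} =>
      1 / latNorm (k - (h : Fin d → ℤ)) ^ (2 * n - 2) := by
    simpa [Function.comp_def, e₂] using hζ.comp_injective he₂
  have hBsum : Summable fun h : {h : Fin d → ℤ // h ≠ 0 ∧ h ≠ k} =>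
      2 ^ (2 * p - 4) * p ^ 2 *
        (1 / latNorm (h : Fin d → ℤ) ^ (2 * n - 2) +
          1 / latNorm (k - (h : Fin d → ℤ)) ^ (2 * n - 2)) := (hs1.add hs2).mul_left _
  have hGsum : Summable fun h : {h : Fin d → ℤ // h ≠ 0 ∧ h ≠ k} =>
      Gterm p n k (h : Fin d → ℤ) := Summable.of_nonneg_of_le hGnn key hBsum
  refine ⟨hGsum, ?_⟩
  set Z := ∑' h : {h : Fin d → ℤ // h ≠ 0}, 1 / latNorm (h : Fin d → ℤ) ^ (2 * n - 2) with hZ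
  have hζnn : ∀ h : {h : Fin d → ℤ // h ≠ 0},
      0 ≤ 1 / latNorm (h : Fin d → ℤ) ^ (2 * n - 2) := fun h =>
    one_div_nonneg.mpr (Real.rpow_nonneg (Real.sqrt_nonneg _) _)
  have hZ0 : 0 ≤ Z := tsum_nonneg hζnn
  have hS1 : ∑' h : {h : Fin d → ℤ // h ≠ 0 ∧ h ≠ k},
      1 / latNorm (h : Fin d → ℤ) ^ (2 * n - 2) ≤ Z :=
    Summable.tsum_le_tsum_of_inj e₁ he₁ (fun c _ => hζnn c) (fun i => le_refl _) hs1 hζ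
  have hS2 : ∑' h : {h : Fin d → ℤ // h ≠ 0 ∧ h ≠ k},
      1 / latNorm (k - (h : Fin d → ℤ)) ^ (2 * n - 2) ≤ Z :=
    Summable.tsum_le_tsum_of_inj e₂ he₂ (fun c _ => hζnn c) (fun i => le_refl _) hs2 hζ
  have hts : ∑' h : {h : Fin d → ℤ // h ≠ 0 ∧ h ≠ k}, Gterm p n k (h : Fin d → ℤ) ≤
      2 ^ (2 * p - 4) * p ^ 2 *
        ((∑' h : {h : Fin d → ℤ // h ≠ 0 ∧ h ≠ k},
            1 / latNorm (h : Fin d → ℤ) ^ (2 * n - 2)) +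
          ∑' h : {h : Fin d → ℤ // h ≠ 0 ∧ h ≠ k},
            1 / latNorm (k - (h : Fin d → ℤ)) ^ (2 * n - 2)) := by
    calc ∑' h : {h : Fin d → ℤ // h ≠ 0 ∧ h ≠ k}, Gterm p n k (h : Fin d → ℤ)
        ≤ ∑' h : {h : Fin d → ℤ // h ≠ 0 ∧ h ≠ k},
            2 ^ (2 * p - 4) * p ^ 2 *
              (1 / latNorm (h : Fin d → ℤ) ^ (2 * n - 2) +
                1 / latNorm (k - (h : Fin d → ℤ)) ^ (2 * n - 2)) :=
          Summable.tsum_le_tsum key hGsum hBsum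
      _ = _ := by
          rw [tsum_mul_left, Summable.tsum_add hs1 hs2]
  have hpow : (0:ℝ) < 2 ^ (2 * p - 4) := Real.rpow_pos_of_pos two_pos _
  have h8 : (8:ℝ) * 2 ^ (2 * p - 4) = 2 ^ (2 * p - 1) := by
    rw [show (2 * p - 1 : ℝ) = 3 + (2 * p - 4) by ring, Real.rpow_add two_pos,
      show ((3:ℝ)) = ((3:ℕ):ℝ) by norm_num, Real.rpow_natCast]
    norm_num
  have hfin : 2 ^ (2 * p - 1) * p ^ 2 * Z ≤ 2 ^ (2 * p) * p ^ 2 * Z := by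
    have hexp : (2:ℝ) ^ (2 * p - 1) ≤ 2 ^ (2 * p) :=
      Real.rpow_le_rpow_of_exponent_le (by norm_num) (by linarith)
    have hp2nn : (0:ℝ) ≤ p ^ 2 * Z := by positivity
    calc 2 ^ (2 * p - 1) * p ^ 2 * Z = 2 ^ (2 * p - 1) * (p ^ 2 * Z) := by ring
      _ ≤ 2 ^ (2 * p) * (p ^ 2 * Z) := mul_le_mul_of_nonneg_right hexp hp2nn
      _ = 2 ^ (2 * p) * p ^ 2 * Z := by ring
  calc 4 * ∑' h : {h : Fin d → ℤ // h ≠ 0 ∧ h ≠ k}, Gterm p n k (h : Fin d → ℤ)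
      ≤ 4 * (2 ^ (2 * p - 4) * p ^ 2 *
          ((∑' h : {h : Fin d → ℤ // h ≠ 0 ∧ h ≠ k},
              1 / latNorm (h : Fin d → ℤ) ^ (2 * n - 2)) +
            ∑' h : {h : Fin d → ℤ // h ≠ 0 ∧ h ≠ k},
              1 / latNorm (k - (h : Fin d → ℤ)) ^ (2 * n - 2))) := by
        linarith
    _ ≤ 4 * (2 ^ (2 * p - 4) * p ^ 2 * (Z + Z)) := by
        have hc : (0:ℝ) ≤ 4 * (2 ^ (2 * p - 4) * p ^ 2) := by positivity
        have := add_le_add hS1 hS2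
        calc 4 * (2 ^ (2 * p - 4) * p ^ 2 * (_ + _))
            = 4 * (2 ^ (2 * p - 4) * p ^ 2) * (_ + _) := by ring
          _ ≤ 4 * (2 ^ (2 * p - 4) * p ^ 2) * (Z + Z) :=
              mul_le_mul_of_nonneg_left (add_le_add hS1 hS2) hc
          _ = 4 * (2 ^ (2 * p - 4) * p ^ 2 * (Z + Z)) := by ring
    _ = 2 ^ (2 * p - 1) * p ^ 2 * Z := by
        rw [← h8]; ring
    _ ≤ 2 ^ (2 * p) * p ^ 2 * Z := hfin
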